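/- arXiv:2010.05041 — 8 statements merged into one kernel-verified Lean document; each statement's English description precedes it below -/
import Mathlib

section
/- Every hereditary, isomorphism-closed class of finite graphs which has the extension property for partial automorphisms (EPPA) and the joint embedding property also has the amalgamation property. -/
open SimpleGraph

/-- A class of finite graphs, indexed by the number of vertices. -/
abbrev GClass := ∀ n : ℕ, SimpleGraph (Fin n) → Prop

/-- `K` is hereditary: closed under induced subgraphs (given by graph embeddings). -/
def Hereditary (K : GClass) : Prop :=
  ∀ {n m : ℕ} (A : SimpleGraph (Fin n)) (B : SimpleGraph (Fin m)),
    K n A → Nonempty (B ↪g A) → K m B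

/-- `K` is closed under isomorphism. -/
def IsoClosed (K : GClass) : Prop :=
  ∀ {n : ℕ} (A B : SimpleGraph (Fin n)), K n A → Nonempty (A ≃g B) → K n B

/-- Joint embedding property. -/
def JEP (K : GClass) : Prop :=
  ∀ {n m : ℕ} (A : SimpleGraph (Fin n)) (B : SimpleGraph (Fin m)),
    K n A → K m B →
    ∃ (p : ℕ) (C : SimpleGraph (Fin p)),
      K p C ∧ Nonempty (A ↪g C) ∧ Nonempty (B ↪g C)

/-- Amalgamation property. -/
def Amalgamation (K : GClass) : Prop :=
  ∀ {na n1 n2 : ℕ} (A : SimpleGraph (Fin na)) (B1 : SimpleGraph (Fin n1))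
    (B2 : SimpleGraph (Fin n2)) (α1 : A ↪g B1) (α2 : A ↪g B2),
    K na A → K n1 B1 → K n2 B2 →
    ∃ (p : ℕ) (C : SimpleGraph (Fin p)) (β1 : B1 ↪g C) (β2 : B2 ↪g C),
      K p C ∧ ∀ a, β1 (α1 a) = β2 (α2 a)

/-- A partial automorphism of `A`: an isomorphism between two induced subgraphs of `A`,
given by its domain `s` and the map `f` (only the values on `s` matter). -/
def IsPartialAuto {n : ℕ} (A : SimpleGraph (Fin n)) (s : Set (Fin n))
    (f : Fin n → Fin n) : Prop :=
  Set.InjOn f s ∧ ∀ a ∈ s, ∀ b ∈ s, (A.Adj (f a) (f b) ↔ A.Adj a b)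

/-- Extension property for partial automorphisms. -/
def HasEPPA (K : GClass) : Prop :=
  ∀ {n : ℕ} (A : SimpleGraph (Fin n)), K n A →
    ∃ (m : ℕ) (B : SimpleGraph (Fin m)) (e : A ↪g B), K m B ∧
      ∀ (s : Set (Fin n)) (f : Fin n → Fin n), IsPartialAuto A s f →
        ∃ g : B ≃g B, ∀ a ∈ s, g (e a) = e (f a)

/-- every hereditary isomorphism-closed class of finite graphs with EPPA
and the joint embedding property has the amalgamation property. -/
theorem eppa_jep_implies_amalgamation (K : GClass)
    (hHer : Hereditary K) (hIso : IsoClosed K)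
    (hEPPA : HasEPPA K) (hJEP : JEP K) :
    Amalgamation K := by
  intro na n1 n2 A B1 B2 α1 α2 hA hB1 hB2
  obtain ⟨q, D, hD, ⟨j1⟩, ⟨j2⟩⟩ := hJEP B1 B2 hB1 hB2
  obtain ⟨p, C, e, hC, hext⟩ := hEPPA D hD
  -- the partial automorphism of D sending j1 (α1 a) to j2 (α2 a)
  set s : Set (Fin q) := Set.range (fun a => j1 (α1 a)) with hs
  have hinj1 : Function.Injective (fun a => j1 (α1 a)) :=
    j1.injective.comp α1.injective
  classical
  set f : Fin q → Fin q := fun x =>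
    if h : ∃ a, j1 (α1 a) = x then j2 (α2 h.choose) else x with hf
  have key : ∀ a, f (j1 (α1 a)) = j2 (α2 a) := by
    intro a
    have h : ∃ b, j1 (α1 b) = j1 (α1 a) := ⟨a, rfl⟩
    have := h.choose_spec
    have hba : h.choose = a := hinj1 this
    simp only [hf, dif_pos h, hba]
  have hpa : IsPartialAuto D s f := by
    constructor
    · rintro x ⟨a, rfl⟩ y ⟨b, rfl⟩ hxy
      simp only at hxy
      rw [key, key] at hxy
      exact congrArg _ (congrArg _ (α2.injective (j2.injective hxy)))
    · rintro x ⟨a, rfl⟩ y ⟨b, rfl⟩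
      simp only [key]
      rw [j2.map_adj_iff, α2.map_adj_iff, j1.map_adj_iff, α1.map_adj_iff]
  obtain ⟨g, hg⟩ := hext s f hpa
  refine ⟨p, C, (g.toEmbedding.comp e).comp j1, e.comp j2, hC, ?_⟩
  intro a
  have := hg (j1 (α1 a)) ⟨a, rfl⟩
  simpa [key] using this
end

section
/- Every hereditary, isomorphism-closed Ramsey class of finite graphs with the joint embedding property has the amalgamation property. -/
open SimpleGraph

/-- `K` is a Ramsey class: for all `A, B ∈ K` and `k ≥ 1` there is `C ∈ K` such that every
`k`-colouring of the embeddings of `A` into `C` admits an embedding `f : B ↪g C` on whose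
copy of `B` all embeddings of `A` get the same colour. -/
def IsRamsey (K : GClass) : Prop :=
  ∀ {na nb : ℕ} (A : SimpleGraph (Fin na)) (B : SimpleGraph (Fin nb)) (k : ℕ),
    K na A → K nb B → 0 < k →
    ∃ (p : ℕ) (C : SimpleGraph (Fin p)), K p C ∧
      ∀ χ : (A ↪g C) → Fin k, ∃ f : B ↪g C,
        ∀ e1 e2 : A ↪g B, χ (f.comp e1) = χ (f.comp e2)

/-- every hereditary, isomorphism-closed Ramsey class of finite graphs with the
joint embedding property has the amalgamation property. -/
theorem ramsey_jep_implies_amalgamation (K : GClass)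
    (hHer : Hereditary K) (hIso : IsoClosed K)
    (hRamsey : IsRamsey K) (hJEP : JEP K) :
    Amalgamation K := by
  intro na n1 n2 A B1 B2 α1 α2 hA hB1 hB2
  obtain ⟨q, D, hD, ⟨j1⟩, ⟨j2⟩⟩ := hJEP B1 B2 hB1 hB2
  obtain ⟨p, C, hC, hR⟩ := hRamsey A D 2 hA hD (by norm_num)
  classical
  set χ : (A ↪g C) → Fin 2 :=
    fun e => if ∃ g : B1 ↪g C, ∀ a, g (α1 a) = e a then 1 else 0 with hχ
  obtain ⟨f, hf⟩ := hR χ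
  have h1 : χ (f.comp (j1.comp α1)) = 1 := by
    rw [hχ]
    exact if_pos ⟨f.comp j1, fun a => rfl⟩
  have h2 := hf (j1.comp α1) (j2.comp α2)
  rw [h1] at h2
  have hex : ∃ g : B1 ↪g C, ∀ a, g (α1 a) = (f.comp (j2.comp α2)) a := by
    by_contra h
    rw [hχ] at h2
    simp only [if_neg h] at h2
    exact absurd h2.symm (by decide)
  obtain ⟨g, hg⟩ := hex
  exact ⟨p, C, g, f.comp j2, hC, fun a => hg a⟩
end

section
/- If a hereditary isomorphism-closed class K of finite graphs is Ramsey (for embedding colourings), then every graph in K is rigid, i.e., has no nontrivial automorphism. -/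
open SimpleGraph

/-- `K` is Ramsey for 2-colourings of embeddings. -/
def IsRamsey2 (K : GClass) : Prop :=
  ∀ {na nb : ℕ} (A : SimpleGraph (Fin na)) (B : SimpleGraph (Fin nb)),
    K na A → K nb B →
    ∃ (p : ℕ) (C : SimpleGraph (Fin p)), K p C ∧
      ∀ χ : (A ↪g C) → Fin 2, ∃ f : B ↪g C,
        ∀ e1 e2 : A ↪g B, χ (f.comp e1) = χ (f.comp e2)

/-- if a hereditary isomorphism-closed class of finite graphs is Ramsey for
embedding colourings, then every graph in the class is rigid (its only automorphism is the
identity). -/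
theorem ramsey_implies_rigid (K : GClass)
    (hHer : Hereditary K) (hIso : IsoClosed K) (hRamsey : IsRamsey2 K) :
    ∀ {n : ℕ} (A : SimpleGraph (Fin n)), K n A → ∀ (g : A ≃g A) (v : Fin n), g v = v := by
  intro n A hA g v
  by_contra hv
  obtain ⟨p, C, hC, hprop⟩ := hRamsey A A hA hA
  obtain ⟨enc, henc⟩ := Countable.exists_injective_nat (Fin n → Fin p)
  -- the embedding version of g
  set gE : A ↪g A := g.toEmbedding with hgE
  -- iterated embeddings
  let E : ℕ → (A ↪g A) := fun k => Nat.rec (SimpleGraph.Embedding.refl) (fun _ e => e.comp gE) k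
  have coeE : ∀ k, ⇑(E k) = (⇑g)^[k] := by
    intro k
    induction k with
    | zero => rfl
    | succ k ih =>
      show ⇑((E k).comp gE) = (⇑g)^[k+1]
      rw [Function.iterate_succ]
      ext x
      simp [ih]
      rfl
  let χ : (A ↪g C) → Fin 2 := fun e => if enc ⇑e < enc ⇑(e.comp gE) then 0 else 1
  obtain ⟨f, hf⟩ := hprop χ
  let a : ℕ → ℕ := fun k => enc (⇑f ∘ (⇑g)^[k])
  have hχk : ∀ k, χ (f.comp (E k)) = (if a k < a (k+1) then 0 else 1) := by
    intro k
    show (if enc ⇑(f.comp (E k)) < enc ⇑((f.comp (E k)).comp gE) then (0:Fin 2) else 1) = _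
    have h1 : ⇑(f.comp (E k)) = ⇑f ∘ (⇑g)^[k] := by
      ext x; simp [coeE k]
    have h2 : ⇑((f.comp (E k)).comp gE) = ⇑f ∘ (⇑g)^[k+1] := by
      ext x
      rw [Function.iterate_succ]
      simp [coeE k]
      rfl
    rw [h1, h2]
  -- a k ≠ a (k+1)
  have hane : ∀ k, a k ≠ a (k+1) := by
    intro k h
    have h' : (⇑f ∘ (⇑g)^[k]) = (⇑f ∘ (⇑g)^[k+1]) := henc h
    have hginj : Function.Injective ⇑g := g.toEquiv.injective
    have : ∀ x, (⇑g)^[k] x = (⇑g)^[k] (g x) := by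
      intro x
      have := congrFun h' x
      rw [Function.iterate_succ] at this
      exact f.injective this
    have hiter : Function.Injective ((⇑g)^[k]) := Function.Injective.iterate hginj k
    exact hv (hiter (this v)).symm
  -- periodicity
  set σ : Equiv.Perm (Fin n) := g.toEquiv with hσ
  set m := orderOf σ with hm
  have hmpos : 0 < m := orderOf_pos σ
  have hiterid : (⇑g)^[m] = id := by
    have : σ ^ m = 1 := pow_orderOf_eq_one σ
    have h2 : (⇑σ)^[m] = ⇑(σ ^ m) := (Equiv.Perm.coe_pow σ m).symm
    rw [this] at h2
    have hcoe : ⇑σ = ⇑g := rfl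
    rw [hcoe] at h2
    simpa using h2
  have hper : a m = a 0 := by
    simp only [a, hiterid, Function.iterate_zero]
  have hconst : ∀ k, χ (f.comp (E k)) = χ (f.comp (E 0)) := fun k => hf (E k) (E 0)
  by_cases h01 : a 0 < a 1
  · have hall : ∀ k, a k < a (k+1) := by
      intro k
      have := (hconst k).trans (hχk 0)
      rw [hχk k, if_pos h01] at this
      by_contra hlt
      rw [if_neg hlt] at this
      exact one_ne_zero this
    have : a 0 < a m := by
      have hsm : StrictMono a := strictMono_nat_of_lt_succ hall
      exact hsm hmpos
    omega
  · have hall : ∀ k, a (k+1) < a k := by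
      intro k
      have := (hconst k).trans (hχk 0)
      rw [hχk k, if_neg h01] at this
      by_cases hlt : a k < a (k+1)
      · rw [if_pos hlt] at this; exact absurd this zero_ne_one
      · exact lt_of_le_of_ne (Nat.le_of_not_lt hlt) (hane k).symm
    have : a m < a 0 := by
      have hsa : StrictAnti a := strictAnti_nat_of_succ_lt hall
      exact hsa hmpos
    omega
end

section
/- For every free amalgamation class K of finite graphs there exists a family F of finite graphs, each of which is connected (irreducible), such that K is exactly the class of finite graphs A into which no member of F embeds as an induced subgraph. -/
open SimpleGraph

/-- A class of finite graphs (over arbitrary finite vertex types). -/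
abbrev FClass := ∀ (V : Type) [Fintype V], SimpleGraph V → Prop

def FHereditary (K : FClass) : Prop :=
  ∀ (V W : Type) [Fintype V] [Fintype W] (A : SimpleGraph V) (B : SimpleGraph W),
    K V A → Nonempty (B ↪g A) → K W B

def FIsoClosed (K : FClass) : Prop :=
  ∀ (V W : Type) [Fintype V] [Fintype W] (A : SimpleGraph V) (B : SimpleGraph W),
    K V A → Nonempty (A ≃g B) → K W B

/-- `K` is closed under free amalgamation: if the vertex set of `C` is covered by `s` and `t`,
there are no edges between `s \ t` and `t \ s`, and the induced subgraphs on `s` and `t`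
belong to `K`, then `C ∈ K`. -/
def FreeAmalgClosed (K : FClass) : Prop :=
  ∀ (V : Type) [Fintype V] (C : SimpleGraph V) (s t : Finset V),
    (↑s ∪ ↑t : Set V) = Set.univ →
    (∀ x y, x ∈ s → x ∉ t → y ∈ t → y ∉ s → ¬ C.Adj x y) →
    K _ (C.induce ↑s) → K _ (C.induce ↑t) → K V C

/-- A graph is irreducible if it is not the free amalgamation of two proper induced
subgraphs. -/
def GIrreducible {V : Type} (C : SimpleGraph V) : Prop :=
  ¬ ∃ s t : Set V, s ∪ t = Set.univ ∧ s ≠ Set.univ ∧ t ≠ Set.univ ∧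
      ∀ x ∈ s \ t, ∀ y ∈ t \ s, ¬ C.Adj x y

/-- Induced subgraph of an induced subgraph is an induced subgraph on the image set. -/
noncomputable def induceInduceIso {V : Type} (A : SimpleGraph V) (s : Set V) (u : Set ↥s) :
    (A.induce s).induce u ≃g A.induce (Subtype.val '' u) where
  toEquiv := Equiv.Set.image _ u Subtype.val_injective
  map_rel_iff' := by
    intro a b
    simp [Equiv.Set.image, Equiv.Set.imageOfInjOn]

/-- Transport an induced subgraph along an equality of sets. -/
noncomputable def induceSetCongr {V : Type} (A : SimpleGraph V) {s t : Set V} (h : s = t) :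
    A.induce s ≃g A.induce t := by subst h; exact RelIso.refl _

/-- The whole graph is isomorphic to the subgraph induced by `↑Finset.univ`. -/
noncomputable def induceFinsetUnivIso {V : Type} [Fintype V] (A : SimpleGraph V) :
    A.induce ↑(Finset.univ : Finset V) ≃g A :=
  (induceSetCongr A (Finset.coe_univ)).trans A.induceUnivIso

/-- for every free amalgamation class `K` of finite graphs there is a family `F`
of irreducible finite graphs such that `K` is exactly the class of finite graphs into which
no member of `F` embeds as an induced subgraph. -/
theorem free_amalg_class_eq_forb (K : FClass)
    (hHer : FHereditary K) (hIso : FIsoClosed K) (hFree : FreeAmalgClosed K) :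
    ∃ F : FClass,
      (∀ (V : Type) [Fintype V] (G : SimpleGraph V), F V G → GIrreducible G) ∧
      (∀ (V : Type) [Fintype V] (A : SimpleGraph V),
        K V A ↔ ∀ (W : Type) [Fintype W] (Fg : SimpleGraph W), F W Fg → IsEmpty (Fg ↪g A)) := by
  classical
  refine ⟨fun W _ Fg => ¬ K W Fg ∧
      ∀ u : Finset W, (↑u : Set W) ≠ Set.univ → K _ (Fg.induce ↑u), ?_, ?_⟩
  · -- each member of F is irreducible
    rintro V _ G ⟨hG, hmin⟩ ⟨s, t, hcov, hs, ht, hcross⟩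
    have hsf : s.Finite := Set.toFinite s
    have htf : t.Finite := Set.toFinite t
    apply hG
    apply hFree V G hsf.toFinset htf.toFinset
    · rw [Set.Finite.coe_toFinset, Set.Finite.coe_toFinset]; exact hcov
    · intro x y hx hxt hy hys
      rw [Set.Finite.mem_toFinset] at hx hy
      rw [Set.Finite.mem_toFinset] at hxt hys
      exact hcross x ⟨hx, hxt⟩ y ⟨hy, hys⟩
    · exact hmin _ (by rw [Set.Finite.coe_toFinset]; exact hs)
    · exact hmin _ (by rw [Set.Finite.coe_toFinset]; exact ht)
  · intro V _ A
    constructor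
    · rintro hA W _ Fg ⟨hFg, -⟩
      exact ⟨fun f => hFg (hHer V W A Fg hA ⟨f⟩)⟩
    · intro h
      by_contra hA
      have hex : ∃ n, ∃ s : Finset V, s.card = n ∧ ¬ K _ (A.induce ↑s) := by
        refine ⟨(Finset.univ : Finset V).card, Finset.univ, rfl, fun hK => hA ?_⟩
        exact hIso _ _ _ _ hK ⟨induceFinsetUnivIso A⟩
      obtain ⟨s, hcard, hKs⟩ := Nat.find_spec hex
      have hFmem : ¬ K _ (A.induce ↑s) ∧
          ∀ u : Finset ↥(↑s : Set V), (↑u : Set ↥(↑s : Set V)) ≠ Set.univ →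
            K _ ((A.induce ↑s).induce ↑u) := by
        refine ⟨hKs, fun u hu => ?_⟩
        have hune : u ≠ Finset.univ := by
          intro hEq; exact hu (by rw [hEq, Finset.coe_univ])
        have hlt : u.card < s.card := by
          have := Finset.card_lt_card (Finset.ssubset_univ_iff.mpr hune)
          simpa [Fintype.card_coe] using this
        set v : Finset V := u.image Subtype.val with hv
        have hvcard : v.card = u.card :=
          Finset.card_image_of_injective _ Subtype.val_injective
        have hKv : K _ (A.induce ↑v) := by
          by_contra hKv
          exact Nat.find_min hex (by omega : v.card < Nat.find hex) ⟨v, rfl, hKv⟩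
        refine hIso _ _ _ _ hKv ⟨?_⟩
        exact (induceSetCongr A (by rw [hv, Finset.coe_image])).trans
          (induceInduceIso A (↑s) (↑u)).symm
      exact (h _ (A.induce ↑s) hFmem).false (Embedding.induce (G := A) (↑s : Set V))
end

section
/- Every partial injection on a finite set extends to a permutation of that set; moreover, the extension can be chosen coherently: there is a map φ from partial injections of a finite set X to permutations of X such that φ(f) extends f and φ sends coherent triples to coherent triples. -/
/-- A partial bijection (partial injection) of a set `X`. -/
structure PartialBij (X : Type) where
  dom : Set X
  ran : Set X
  toFun : X → X
  maps_to : ∀ x ∈ dom, toFun x ∈ ran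
  injOn : Set.InjOn toFun dom
  surjOn : ran ⊆ toFun '' dom

/-- A coherent triple `(f, g, h)` of partial bijections. -/
def CoherentTriple {X : Type} (f g h : PartialBij X) : Prop :=
  f.dom = h.dom ∧ f.ran = g.dom ∧ g.ran = h.ran ∧
    ∀ x ∈ f.dom, h.toFun x = g.toFun (f.toFun x)

namespace CoherentAux

open Classical

variable {X : Type} [Fintype X] [LinearOrder X]

omit [Fintype X] [LinearOrder X] in

theorem bijOn (f : PartialBij X) : Set.BijOn f.toFun f.dom f.ran :=
  ⟨f.maps_to, f.injOn, f.surjOn⟩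

open Classical in
/-- The canonical (unique) order isomorphism between two subsets of equal cardinality. -/
noncomputable def oIso (s t : Set X) (h : Nat.card s = Nat.card t) : s ≃o t :=
  (monoEquivOfFin s Nat.card_eq_fintype_card.symm).symm.trans
    (monoEquivOfFin t (Nat.card_eq_fintype_card.symm.trans h.symm))

open Classical in
theorem card_compl_eq (f : PartialBij X) :
    Nat.card ↥(f.domᶜ) = Nat.card ↥(f.ranᶜ) := by
  have h1 : Nat.card f.dom = Nat.card f.ran :=
    Nat.card_congr ((bijOn f).equiv f.toFun)
  have h2 := Set.ncard_add_ncard_compl f.dom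
  have h3 := Set.ncard_add_ncard_compl f.ran
  simp only [← Nat.card_coe_set_eq] at h2 h3
  omega

open Classical in
/-- Extension of a partial bijection to a permutation. -/
noncomputable def ext (f : PartialBij X) : Equiv.Perm X :=
  (Equiv.Set.sumCompl f.dom).symm.trans
    ((Equiv.sumCongr ((bijOn f).equiv f.toFun) (oIso _ _ (card_compl_eq f)).toEquiv).trans
      (Equiv.Set.sumCompl f.ran))

open Classical in
theorem ext_mem (f : PartialBij X) {x : X} (hx : x ∈ f.dom) : ext f x = f.toFun x := by
  simp only [ext, Equiv.trans_apply, Equiv.Set.sumCompl_symm_apply_of_mem hx,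
    Equiv.sumCongr_apply, Sum.map_inl, Equiv.Set.sumCompl_apply_inl]
  rfl

open Classical in
theorem ext_notMem (f : PartialBij X) {x : X} (hx : x ∉ f.dom) :
    ext f x = ((oIso _ _ (card_compl_eq f)) ⟨x, hx⟩ : X) := by
  simp only [ext, Equiv.trans_apply, Equiv.Set.sumCompl_symm_apply_of_notMem hx,
    Equiv.sumCongr_apply, Sum.map_inr, Equiv.Set.sumCompl_apply_inr, RelIso.coe_fn_toEquiv]

open Classical in
theorem ext_coherent (f g h : PartialBij X) (hc : CoherentTriple f g h) (x : X) :
    ext h x = ext g (ext f x) := by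
  obtain ⟨hdom, hmid, hran, hcomp⟩ := hc
  by_cases hx : x ∈ f.dom
  · rw [ext_mem f hx, ext_mem h (hdom ▸ hx), hcomp x hx,
      ext_mem g (hmid ▸ f.maps_to x hx)]
  · have hx' : x ∉ h.dom := hdom ▸ hx
    rw [ext_notMem f hx, ext_notMem h hx']
    have hy : ((oIso _ _ (card_compl_eq f)) ⟨x, hx⟩ : X) ∉ g.dom := by
      have := ((oIso _ _ (card_compl_eq f)) ⟨x, hx⟩).2
      rw [← hmid]; exact this
    rw [ext_notMem g hy]
    -- Uniqueness of order isomorphisms between finite linear orders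
    have hd : h.domᶜ = f.domᶜ := by rw [hdom]
    have hm : f.ranᶜ = g.domᶜ := by rw [hmid]
    have hr : g.ranᶜ = h.ranᶜ := by rw [hran]
    let E : ↥(h.domᶜ) ≃o ↥(h.ranᶜ) :=
      (((OrderIso.setCongr _ _ hd).trans (oIso _ _ (card_compl_eq f))).trans
        ((OrderIso.setCongr _ _ hm).trans (oIso _ _ (card_compl_eq g)))).trans
        (OrderIso.setCongr _ _ hr)
    have hE : oIso (h.domᶜ) (h.ranᶜ) (card_compl_eq h) = E := Subsingleton.elim _ _
    have key := congrArg (fun e => ((e ⟨x, hx'⟩ : ↥(h.ranᶜ)) : X)) hE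
    simp only [E, OrderIso.trans_apply] at key
    rw [key]
    have e1 : (OrderIso.setCongr _ _ hd) ⟨x, hx'⟩ = (⟨x, hx⟩ : ↥(f.domᶜ)) :=
      Subtype.ext rfl
    rw [e1]
    have e2 : (OrderIso.setCongr _ _ hm) ((oIso _ _ (card_compl_eq f)) ⟨x, hx⟩) =
        (⟨((oIso _ _ (card_compl_eq f)) ⟨x, hx⟩ : X), hy⟩ : ↥(g.domᶜ)) :=
      Subtype.ext rfl
    rw [e2]
    rfl

end CoherentAux

/-- every partial injection of a finite set extends to a permutation, and the
extension can be chosen coherently: there is a map `φ` from partial injections of `X` to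
permutations of `X` such that `φ f` extends `f`, and whenever `(f, g, h)` is a coherent
triple, `φ h = φ g ∘ φ f`. -/
theorem coherent_extension_of_partial_injections (X : Type) [Fintype X] [DecidableEq X] :
    ∃ φ : PartialBij X → Equiv.Perm X,
      (∀ f : PartialBij X, ∀ x ∈ f.dom, φ f x = f.toFun x) ∧
      (∀ f g h : PartialBij X, CoherentTriple f g h →
        ∀ x : X, φ h x = φ g (φ f x)) := by
  letI : LinearOrder X := LinearOrder.lift' (Fintype.equivFin X) (Equiv.injective _)
  exact ⟨CoherentAux.ext, fun f x hx => CoherentAux.ext_mem f hx,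
    fun f g h hc x => CoherentAux.ext_coherent f g h hc x⟩
end

section
/- The class of all finite graphs that are disjoint unions of at most n cliques (for a fixed finite n ≥ 2) does not have the amalgamation property with automorphisms (APA): the amalgamation of an n-vertex edgeless graph and a 2-vertex edgeless graph over the empty graph cannot be completed so that all compatible automorphism pairs extend. -/
open SimpleGraph

/-- The amalgamation property with automorphisms (APA): any amalgamation situation has a
solution `C` such that every compatible pair of automorphisms of `B1` and `B2` (preserving
the image of `A` setwise and agreeing on `A`) extends to a common automorphism of `C`. -/
def HasAPA (K : GClass) : Prop :=
  ∀ {na n1 n2 : ℕ} (A : SimpleGraph (Fin na)) (B1 : SimpleGraph (Fin n1))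
    (B2 : SimpleGraph (Fin n2)) (α1 : A ↪g B1) (α2 : A ↪g B2),
    K na A → K n1 B1 → K n2 B2 →
    ∃ (p : ℕ) (C : SimpleGraph (Fin p)) (β1 : B1 ↪g C) (β2 : B2 ↪g C),
      K p C ∧ (∀ a, β1 (α1 a) = β2 (α2 a)) ∧
      ∀ (f1 : B1 ≃g B1) (f2 : B2 ≃g B2),
        (∀ a, ∃ a', f1 (α1 a) = α1 a') →
        (∀ a, ∃ a', f2 (α2 a) = α2 a') →
        (∀ a a', f1 (α1 a) = α1 a' → f2 (α2 a) = α2 a') →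
        ∃ g : C ≃g C, (∀ x, g (β1 x) = β1 (f1 x)) ∧ (∀ x, g (β2 x) = β2 (f2 x))

/-- The class of finite graphs which are disjoint unions of at most `n` cliques: the vertex
set partitions into at most `n` cliques with no edges between them. -/
def UnionOfCliques (n : ℕ) : GClass :=
  fun m G => ∃ c : Fin m → Fin n, ∀ x y : Fin m, x ≠ y → (G.Adj x y ↔ c x = c y)

/-- Embedding of the empty graph into any graph. -/
def embFromEmpty {m : ℕ} (G : SimpleGraph (Fin m)) : (⊥ : SimpleGraph (Fin 0)) ↪g G :=
  ⟨⟨Fin.elim0, fun a => a.elim0⟩, fun {a} => a.elim0⟩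

/-- for fixed finite `n ≥ 2`, the class of finite graphs that are disjoint
unions of at most `n` cliques does not have APA. -/
theorem unionOfCliques_not_apa (n : ℕ) (hn : 2 ≤ n) :
    ¬ HasAPA (UnionOfCliques n) := by
  intro h
  obtain ⟨p, C, β1, β2, ⟨c, hc⟩, -, hext⟩ :=
    h (⊥ : SimpleGraph (Fin 0)) (⊥ : SimpleGraph (Fin n)) (⊥ : SimpleGraph (Fin 2))
      (embFromEmpty _) (embFromEmpty _)
      ⟨Fin.elim0, fun x => x.elim0⟩
      ⟨id, fun x y hxy => by simp [hxy]⟩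
      ⟨Fin.castLE hn, fun x y hxy => by
        simp only [bot_adj, false_iff]
        exact fun hh => hxy (Fin.castLE_injective hn hh)⟩
  -- images of β1 have pairwise distinct colors
  have hβ1 : Function.Injective (fun k => c (β1 k)) := by
    intro x y hxy
    by_contra hne
    have hb : β1 x ≠ β1 y := fun hh => hne (β1.injective hh)
    have : C.Adj (β1 x) (β1 y) := (hc _ _ hb).2 hxy
    exact (β1.map_adj_iff.mp this)
  have hsurj : Function.Surjective (fun k => c (β1 k)) :=
    Finite.surjective_of_injective hβ1
  obtain ⟨k, hk0⟩ := hsurj (c (β2 0))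
  have hk : c (β1 k) = c (β2 0) := hk0
  -- β2 0 and β2 1 have distinct colors
  have hb2 : β2 (0 : Fin 2) ≠ β2 1 := fun hh => by
    have := β2.injective hh; exact absurd this (by decide)
  have hc2 : c (β2 0) ≠ c (β2 1) := fun hh =>
    (β2.map_adj_iff.mp ((hc _ _ hb2).2 hh))
  -- extend identity on B1 and swap on B2
  obtain ⟨g, hg1, hg2⟩ := hext (Iso.refl) ⟨Equiv.swap 0 1, by simp⟩
    (fun a => a.elim0) (fun a => a.elim0) (fun a => a.elim0)
  have hg2' : g (β2 0) = β2 1 := by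
    have := hg2 0
    simpa using this
  have hg1' : g (β1 k) = β1 k := by simpa using hg1 k
  by_cases heq : β1 k = β2 0
  · rw [heq] at hg1'
    rw [hg2'] at hg1'
    exact hb2 hg1'.symm
  · have hadj : C.Adj (β1 k) (β2 0) := (hc _ _ heq).2 hk
    have hadj2 : C.Adj (β1 k) (β2 1) := by
      have := g.map_adj_iff.mpr hadj
      rwa [hg1', hg2'] at this
    have hne2 : β1 k ≠ β2 1 := fun hh => hc2 (by rw [← hk, hh])
    exact hc2 (hk ▸ (hc _ _ hne2).1 hadj2)
end

section
/- Let K be a hereditary Ramsey class of finite ordered graphs whose Fraïssé limit is U, let A be a finite substructure of U, and let φ be a quantifier-free equivalence formula on copies of A in U. Then φ has either one or infinitely many equivalence classes. -/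
open SimpleGraph

/-- A class of finite ordered graphs: graphs on `Fin n` carrying the natural linear order. -/
abbrev OClass := ∀ n : ℕ, SimpleGraph (Fin n) → Prop

/-- An embedding of a finite ordered graph `G` (on `Fin n` with its natural order) into an
ordered graph `U` on a linearly ordered vertex set: an injective map preserving both the
order and adjacency (in the induced sense). -/
structure OrdEmb {n : ℕ} (G : SimpleGraph (Fin n)) {V : Type} [LinearOrder V]
    (U : SimpleGraph V) where
  toFun : Fin n → V
  strictMono : StrictMono toFun
  adj_iff : ∀ a b : Fin n, U.Adj (toFun a) (toFun b) ↔ G.Adj a b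

/-- Composition of ordered embeddings of finite ordered graphs. -/
def OrdEmb.comp {n m : ℕ} {G : SimpleGraph (Fin n)} {H : SimpleGraph (Fin m)}
    {V : Type} [LinearOrder V] {U : SimpleGraph V}
    (f : OrdEmb H U) (e : OrdEmb G H) : OrdEmb G U where
  toFun := f.toFun ∘ e.toFun
  strictMono := f.strictMono.comp e.strictMono
  adj_iff := fun a b => (f.adj_iff _ _).trans (e.adj_iff a b)

/-- `K` is hereditary (for ordered graphs). -/
def OHereditary (K : OClass) : Prop :=
  ∀ {n m : ℕ} (A : SimpleGraph (Fin n)) (B : SimpleGraph (Fin m)),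
    K n A → Nonempty (OrdEmb B A) → K m B

/-- `K` is a Ramsey class of finite ordered graphs. -/
def ORamsey (K : OClass) : Prop :=
  ∀ {na nb : ℕ} (A : SimpleGraph (Fin na)) (B : SimpleGraph (Fin nb)) (k : ℕ),
    K na A → K nb B → 0 < k →
    ∃ (p : ℕ) (C : SimpleGraph (Fin p)), K p C ∧
      ∀ χ : OrdEmb A C → Fin k, ∃ f : OrdEmb B C,
        ∀ e1 e2 : OrdEmb A B, χ (f.comp e1) = χ (f.comp e2)

/-- Let `K` be a hereditary Ramsey class of finite ordered graphs with Fraïssé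
limit `U` (a countable homogeneous ordered graph whose age is `K`), let `A = GA` be a finite
substructure of `U` and let `φ` be a quantifier-free equivalence formula on copies of `A` in
`U` (an equivalence relation on tuples whose domain is exactly the enumerations of copies of
`A`, invariant under quantifier-free types). Then `φ` has either one or infinitely many
equivalence classes. -/
theorem equivalence_formula_one_or_infinitely_many_classes
    (K : OClass) (hHer : OHereditary K) (hRamsey : ORamsey K)
    (V : Type) [LinearOrder V] [Countable V] (U : SimpleGraph V)
    -- `U` has age `K`:
    (hAge : ∀ (n : ℕ) (G : SimpleGraph (Fin n)), K n G ↔ Nonempty (OrdEmb G U))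
    -- `U` is homogeneous:
    (hHomog : ∀ (n : ℕ) (G : SimpleGraph (Fin n)) (e1 e2 : OrdEmb G U),
      ∃ θ : V ≃ V, (∀ x y, U.Adj (θ x) (θ y) ↔ U.Adj x y) ∧
        (∀ x y, θ x ≤ θ y ↔ x ≤ y) ∧ ∀ a, θ (e1.toFun a) = e2.toFun a)
    -- `A` is a finite substructure of `U`:
    (na : ℕ) (GA : SimpleGraph (Fin na)) (hA : Nonempty (OrdEmb GA U))
    -- `φ` is an equivalence formula on copies of `A`:
    (φ : (Fin na → V) → (Fin na → V) → Prop)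
    (hdom : ∀ a, φ a a ↔ ∃ e : OrdEmb GA U, e.toFun = a)
    (hsym : ∀ a b, φ a b → φ b a)
    (htrans : ∀ a b c, φ a b → φ b c → φ a c)
    (hrefl : ∀ a b, φ a b → φ a a ∧ φ b b)
    -- `φ` is quantifier-free: it only depends on the quantifier-free type of the pair of
    -- tuples (equalities, adjacencies and order between all coordinates):
    (hqf : ∀ a b a' b' : Fin na → V,
      (∀ i j : Fin na ⊕ Fin na,
        ((Sum.elim a b i = Sum.elim a b j) ↔ (Sum.elim a' b' i = Sum.elim a' b' j)) ∧
        (U.Adj (Sum.elim a b i) (Sum.elim a b j) ↔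
          U.Adj (Sum.elim a' b' i) (Sum.elim a' b' j)) ∧
        ((Sum.elim a b i ≤ Sum.elim a b j) ↔ (Sum.elim a' b' i ≤ Sum.elim a' b' j))) →
      (φ a b ↔ φ a' b')) :
    -- `φ` has one equivalence class, or infinitely many:
    (∀ a b, φ a a → φ b b → φ a b) ∨
      (∀ m : ℕ, ∃ f : Fin m → (Fin na → V),
        (∀ i, φ (f i) (f i)) ∧ ∀ i j, i ≠ j → ¬ φ (f i) (f j)) := by
    classical
  by_contra hcon
  push_neg at hcon
  obtain ⟨⟨a, b, ha, hb, hab⟩, m, hm⟩ := hcon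
  -- the predicate: there exist l pairwise inequivalent copies
  set P : ℕ → Prop := fun l => ∃ f : Fin l → (Fin na → V),
      (∀ i, φ (f i) (f i)) ∧ ∀ i j, i ≠ j → ¬ φ (f i) (f j) with hP
  have hPm : ¬ P m := by
    rintro ⟨f, h1, h2⟩
    obtain ⟨i, j, hij, hphi⟩ := hm f h1
    exact h2 i j hij hphi
  have hP2 : P 2 := by
    refine ⟨![a, b], ?_, ?_⟩
    · intro i
      fin_cases i
      · exact ha
      · exact hb
    · intro i j hij
      fin_cases i <;> fin_cases j
      · exact absurd rfl hij
      · exact hab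
      · exact fun h => hab (hsym _ _ h)
      · exact absurd rfl hij
  have hex : ∃ l, ¬ P l := ⟨m, hPm⟩
  set l0 := Nat.find hex with hl0def
  have hl0 : ¬ P l0 := Nat.find_spec hex
  have hlt : ∀ l, l < l0 → P l := fun l hl => not_not.mp (Nat.find_min hex hl)
  have hPmono : ∀ l l' : ℕ, l ≤ l' → P l' → P l := by
    rintro l l' hle ⟨f, h1, h2⟩
    exact ⟨f ∘ Fin.castLE hle, fun i => h1 _,
      fun i j hij => h2 _ _ (fun h => hij (Fin.castLE_injective hle h))⟩
  have h2l0 : 2 < l0 := by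
    by_contra h
    exact hl0 (hPmono l0 2 (by omega) hP2)
  set k := l0 - 1 with hkdef
  have hk : P k := hlt k (by omega)
  have hk1 : ¬ P (k + 1) := by
    have : k + 1 = l0 := by omega
    rw [this]; exact hl0
  obtain ⟨r, hr1, hr2⟩ := hk
  -- maximality: every copy is equivalent to some r i
  have hmax : ∀ c, φ c c → ∃ i : Fin k, φ c (r i) := by
    intro c hc
    by_contra hno
    push_neg at hno
    apply hk1
    refine ⟨Fin.snoc r c, ?_, ?_⟩
    · intro i
      refine Fin.lastCases ?_ ?_ i
      · simpa using hc
      · intro i; simpa using hr1 i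
    · intro i j hij
      induction i using Fin.lastCases with
      | last =>
        induction j using Fin.lastCases with
        | last => exact absurd rfl hij
        | cast j' => simpa using hno j'
      | cast i' =>
        induction j using Fin.lastCases with
        | last => simpa using fun h => hno i' (hsym _ _ h)
        | cast j' =>
          simpa using hr2 i' j' (fun h => hij (congrArg Fin.castSucc h))
  -- a and b are strictly monotone
  obtain ⟨ea, hea⟩ := (hdom a).mp ha
  obtain ⟨eb, heb⟩ := (hdom b).mp hb
  have haM : StrictMono a := hea ▸ ea.strictMono
  have hbM : StrictMono b := heb ▸ eb.strictMono
  -- build B on the union of the images of a and b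
  set s : Finset V := (Finset.image a Finset.univ) ∪ (Finset.image b Finset.univ) with hsdef
  have hmema : ∀ i, a i ∈ s := fun i => by simp [hsdef]
  have hmemb : ∀ i, b i ∈ s := fun i => by simp [hsdef]
  set nb := s.card with hnb
  set iso : Fin nb ≃o {x // x ∈ s} := s.orderIsoOfFin rfl with hiso
  set GB : SimpleGraph (Fin nb) := SimpleGraph.comap (fun i => (iso i : V)) U with hGB
  have hGBadj : ∀ x y : Fin nb, GB.Adj x y ↔ U.Adj (iso x) (iso y) := fun x y => Iff.rfl
  have j0 : OrdEmb GB U :=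
    ⟨fun i => (iso i : V), fun i j h => Subtype.coe_lt_coe.mpr (iso.strictMono h),
      fun x y => Iff.rfl⟩
  obtain ⟨e1, he1⟩ : ∃ e : OrdEmb GA GB,
      e.toFun = fun i => iso.symm ⟨a i, hmema i⟩ := by
    refine ⟨⟨fun i => iso.symm ⟨a i, hmema i⟩, ?_, ?_⟩, rfl⟩
    · intro i j h
      exact iso.symm.strictMono (Subtype.mk_lt_mk.mpr (haM h))
    · intro x y
      have hv : ∀ i, ((iso (iso.symm ⟨a i, hmema i⟩)) : V) = a i := fun i => by simp
      rw [hGBadj, hv, hv, ← hea]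
      exact ea.adj_iff x y
  obtain ⟨e2, he2⟩ : ∃ e : OrdEmb GA GB,
      e.toFun = fun i => iso.symm ⟨b i, hmemb i⟩ := by
    refine ⟨⟨fun i => iso.symm ⟨b i, hmemb i⟩, ?_, ?_⟩, rfl⟩
    · intro i j h
      exact iso.symm.strictMono (Subtype.mk_lt_mk.mpr (hbM h))
    · intro x y
      have hv : ∀ i, ((iso (iso.symm ⟨b i, hmemb i⟩)) : V) = b i := fun i => by simp
      rw [hGBadj, hv, hv, ← heb]
      exact eb.adj_iff x y
  -- key: for any embedding f of B into U, the images of e1, e2 are inequivalent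
  have hmem : ∀ i : Fin na ⊕ Fin na, Sum.elim a b i ∈ s := by
    rintro (i | i)
    · exact hmema i
    · exact hmemb i
  have key : ∀ f : OrdEmb GB U,
      ¬ φ (f.toFun ∘ e1.toFun) (f.toFun ∘ e2.toFun) := by
    intro f hphi
    set ψ : {x // x ∈ s} → V := fun x => f.toFun (iso.symm x) with hψ
    have hψM : StrictMono ψ := f.strictMono.comp iso.symm.strictMono
    have hψadj : ∀ x y, U.Adj (ψ x) (ψ y) ↔ U.Adj x y := by
      intro x y
      rw [hψ]
      simp only []
      rw [f.adj_iff, hGBadj]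
      simp
    have hrep : ∀ i : Fin na ⊕ Fin na,
        Sum.elim (f.toFun ∘ e1.toFun) (f.toFun ∘ e2.toFun) i
          = ψ ⟨Sum.elim a b i, hmem i⟩ := by
      rintro (i | i) <;>
        simp only [Sum.elim_inl, Sum.elim_inr, Function.comp_apply, he1, he2] <;> rfl
    apply hab
    refine (hqf _ _ a b ?_).mp hphi
    intro i j
    rw [hrep i, hrep j]
    refine ⟨?_, ?_, ?_⟩
    · constructor
      · intro h
        have := hψM.injective h
        exact congrArg Subtype.val this
      · intro h
        exact congrArg ψ (Subtype.ext h)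
    · exact hψadj _ _
    · exact hψM.le_iff_le
  -- Ramsey
  have hKA : K na GA := (hAge na GA).mpr hA
  have hKB : K nb GB := (hAge nb GB).mpr ⟨j0⟩
  obtain ⟨p, C, hKC, hC⟩ := hRamsey GA GB k hKA hKB (by omega)
  obtain ⟨gC⟩ := (hAge p C).mp hKC
  have hcopy : ∀ e : OrdEmb GA C, φ ((gC.comp e).toFun) ((gC.comp e).toFun) :=
    fun e => (hdom _).mpr ⟨gC.comp e, rfl⟩
  let χ : OrdEmb GA C → Fin k := fun e => (hmax ((gC.comp e).toFun) (hcopy e)).choose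
  have hχ : ∀ e, φ ((gC.comp e).toFun) (r (χ e)) :=
    fun e => (hmax ((gC.comp e).toFun) (hcopy e)).choose_spec
  obtain ⟨f, hf⟩ := hC χ
  have h1 := hχ (f.comp e1)
  have h2 := hχ (f.comp e2)
  rw [hf e1 e2] at h1
  have hequiv : φ ((gC.comp (f.comp e1)).toFun) ((gC.comp (f.comp e2)).toFun) :=
    htrans _ _ _ h1 (hsym _ _ h2)
  exact key (gC.comp f) hequiv
end

section
/- A structure with one symmetric binary relation interpreted as distances: a partial edge-labelled complete-graph-completable structure with labels in {1,2,3,4} has a completion to a metric space with distances in {1,2,3,4} if and only if it contains no non-metric triangle (labels 1-1-3, 1-1-4, or 1-2-4) and no 4-cycle labelled 1-1-1-4. -/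
/-- `d'` is a completion of the partial distance function `d` with distances in `S`:
a total symmetric distance function on distinct pairs, with values in `S`, extending `d`
and satisfying the triangle inequality. -/
def IsCompletion {V : Type} (S : Set ℕ) (d : V → V → Option ℕ) (d' : V → V → ℕ) : Prop :=
  (∀ x y, d' x y = d' y x) ∧
  (∀ x y, x ≠ y → d' x y ∈ S) ∧
  (∀ x y v, d x y = some v → d' x y = v) ∧
  (∀ x y z : V, x ≠ y → y ≠ z → x ≠ z → d' x z ≤ d' x y + d' y z)

/-- weight function: defined distance, or `4` for undefined pairs -/
def cWgt {V : Type} (d : V → V → Option ℕ) (x y : V) : ℕ := (d x y).getD 4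

/-- set of lengths of paths with at most 3 edges from `x` to `y` -/
def cPset {V : Type} (d : V → V → Option ℕ) (x y : V) : Set ℕ :=
  {n | n = cWgt d x y ∨ (∃ z, n = cWgt d x z + cWgt d z y) ∨
        ∃ z u, n = cWgt d x z + cWgt d z u + cWgt d u y}

/-- truncated shortest-path distance -/
noncomputable def cDist {V : Type} (d : V → V → Option ℕ) (x y : V) : ℕ :=
  sInf (cPset d x y)

/-- a partial symmetric structure with distances in `{1,2,3,4}` has a
completion to a metric space with distances in `{1,2,3,4}` if and only if it contains no
non-metric triangle (with distances 1-1-3, 1-1-4 or 1-2-4) and no 4-cycle with distances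
1-1-1-4. -/
theorem completion_iff_no_obstacle {V : Type} [Fintype V]
    (d : V → V → Option ℕ)
    (hsymm : ∀ x y, d x y = d y x)
    (hirr : ∀ x, d x x = none)
    (hval : ∀ x y v, d x y = some v → v ∈ ({1, 2, 3, 4} : Set ℕ)) :
    (∃ d' : V → V → ℕ, IsCompletion {1, 2, 3, 4} d d') ↔
      ((¬ ∃ (x y z : V) (a b c : ℕ), x ≠ y ∧ y ≠ z ∧ x ≠ z ∧
          d x y = some a ∧ d y z = some b ∧ d x z = some c ∧
          ({a, b, c} : Multiset ℕ) ∈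
            ({ {1, 1, 3}, {1, 1, 4}, {1, 2, 4} } : Set (Multiset ℕ))) ∧
        (¬ ∃ x1 x2 x3 x4 : V, x1 ≠ x2 ∧ x1 ≠ x3 ∧ x1 ≠ x4 ∧ x2 ≠ x3 ∧ x2 ≠ x4 ∧ x3 ≠ x4 ∧
          d x1 x2 = some 1 ∧ d x2 x3 = some 1 ∧ d x3 x4 = some 1 ∧ d x4 x1 = some 4)) := by
  constructor
  · rintro ⟨d', hS, hMem, hExt, hTri⟩
    refine ⟨?_, ?_⟩
    · rintro ⟨x, y, z, a, b, c, hxy, hyz, hxz, da, db, dc, hm⟩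
      have h1 : d' x z ≤ d' x y + d' y z := hTri x y z hxy hyz hxz
      have h2 : d' x y ≤ d' x z + d' z y := hTri x z y hxz (Ne.symm hyz) hxy
      have h3 : d' y z ≤ d' y x + d' x z := hTri y x z (Ne.symm hxy) hxz hyz
      rw [hS z y] at h2
      rw [hS y x] at h3
      rw [hExt x y a da, hExt y z b db, hExt x z c dc] at h1 h2 h3
      simp only [Set.mem_insert_iff, Set.mem_singleton_iff] at hm
      rcases hm with h | h | h <;>
      · have hs := congrArg Multiset.sum h
        have hma : a ∈ ({a, b, c} : Multiset ℕ) := by simp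
        have hmb : b ∈ ({a, b, c} : Multiset ℕ) := by simp
        have hmc : c ∈ ({a, b, c} : Multiset ℕ) := by simp
        rw [h] at hma hmb hmc
        simp at hs hma hmb hmc
        omega
    · rintro ⟨x1, x2, x3, x4, h12, h13, h14, h23, h24, h34, d12, d23, d34, d41⟩
      have t1 : d' x1 x3 ≤ d' x1 x2 + d' x2 x3 := hTri x1 x2 x3 h12 h23 h13
      have t2 : d' x4 x1 ≤ d' x4 x3 + d' x3 x1 :=
        hTri x4 x3 x1 (Ne.symm h34) (Ne.symm h13) (Ne.symm h14)
      rw [hS x4 x3, hS x3 x1] at t2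
      rw [hExt _ _ _ d12, hExt _ _ _ d23] at t1
      rw [hExt _ _ _ d34, hExt _ _ _ d41] at t2
      omega
  · rintro ⟨hT, hC⟩
    have hw1 : ∀ x y, 1 ≤ cWgt d x y := by
      intro x y
      unfold cWgt
      cases h : d x y with
      | none => simp
      | some v =>
        have := hval x y v h
        simp only [Set.mem_insert_iff, Set.mem_singleton_iff] at this
        simp only [Option.getD_some]
        omega
    have hw4 : ∀ x y, cWgt d x y ≤ 4 := by
      intro x y
      unfold cWgt
      cases h : d x y with
      | none => simp
      | some v =>
        have := hval x y v h
        simp only [Set.mem_insert_iff, Set.mem_singleton_iff] at this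
        simp only [Option.getD_some]
        omega
    have hwx : ∀ x, cWgt d x x = 4 := by
      intro x; unfold cWgt; rw [hirr x]; rfl
    have hws : ∀ x y, cWgt d x y = cWgt d y x := by
      intro x y; unfold cWgt; rw [hsymm x y]
    have hdval : ∀ x y, cWgt d x y ≤ 3 → d x y = some (cWgt d x y) := by
      intro x y h
      unfold cWgt at *
      cases hd : d x y with
      | none => rw [hd] at h; simp at h
      | some v => simp
    have hPne : ∀ x y, (cPset d x y).Nonempty := fun x y => ⟨cWgt d x y, Or.inl rfl⟩
    have hDP : ∀ x y, cDist d x y ∈ cPset d x y := fun x y => Nat.sInf_mem (hPne x y)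
    have hDle : ∀ x y n, n ∈ cPset d x y → cDist d x y ≤ n := fun x y n h => Nat.sInf_le h
    have hD4 : ∀ x y, cDist d x y ≤ 4 :=
      fun x y => le_trans (hDle x y _ (Or.inl rfl)) (hw4 x y)
    have hD1 : ∀ x y, 1 ≤ cDist d x y := by
      intro x y
      rcases hDP x y with h | ⟨z, h⟩ | ⟨z, u, h⟩
      · rw [h]; exact hw1 x y
      · have := hw1 x z; omega
      · have := hw1 x z; omega
    have hDsle : ∀ x y, cDist d x y ≤ cDist d y x := by
      intro x y
      rcases hDP y x with h | ⟨z, h⟩ | ⟨z, u, h⟩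
      · have h2 := hDle x y _ (Or.inl rfl)
        rw [h, hws y x]; exact h2
      · have h2 := hDle x y _ (Or.inr (Or.inl ⟨z, rfl⟩))
        rw [h, hws y z, hws z x]; omega
      · have h2 := hDle x y _ (Or.inr (Or.inr ⟨u, z, rfl⟩))
        rw [h, hws y z, hws z u, hws u x]; omega
    have hDsym : ∀ x y, cDist d x y = cDist d y x :=
      fun x y => le_antisymm (hDsle x y) (hDsle y x)
    have hDext : ∀ x y v, d x y = some v → cDist d x y = v := by
      intro x y v hdxy
      have hv := hval x y v hdxy
      simp only [Set.mem_insert_iff, Set.mem_singleton_iff] at hv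
      have hwxy : cWgt d x y = v := by unfold cWgt; rw [hdxy]; rfl
      have hle : cDist d x y ≤ v := hwxy ▸ hDle x y _ (Or.inl rfl)
      by_contra hne'
      have hlt : cDist d x y < v := lt_of_le_of_ne hle hne'
      have hxy : x ≠ y := by
        rintro rfl; rw [hirr] at hdxy; exact Option.some_ne_none v hdxy.symm
      rcases hDP x y with h | ⟨z, h⟩ | ⟨z, u, h⟩
      · omega
      · have hxz1 := hw1 x z
        have hzy1 := hw1 z y
        have dxz := hdval x z (by omega)
        have dzy := hdval z y (by omega)
        have hzx : z ≠ x := by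
          rintro rfl; rw [hwx] at hxz1 h; omega
        have hzyne : z ≠ y := by
          rintro rfl; rw [hwx z] at h; omega
        refine hT ⟨x, z, y, cWgt d x z, cWgt d z y, v, Ne.symm hzx, hzyne, hxy,
          dxz, dzy, hdxy, ?_⟩
        simp only [Set.mem_insert_iff, Set.mem_singleton_iff]
        have e1 : cWgt d x z = 1 ∨ cWgt d x z = 2 := by omega
        have e2 : cWgt d z y = 1 ∨ cWgt d z y = 2 := by omega
        have e3 : v = 3 ∨ v = 4 := by omega
        rcases e1 with e1 | e1 <;> rcases e2 with e2 | e2 <;> rcases e3 with e3 | e3 <;>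
          first
            | (exfalso; omega)
            | (rw [e1, e2, e3]; decide)
      · have h1 := hw1 x z
        have h2 := hw1 z u
        have h3 := hw1 u y
        have e1 : cWgt d x z = 1 := by omega
        have e2 : cWgt d z u = 1 := by omega
        have e3 : cWgt d u y = 1 := by omega
        have hv4 : v = 4 := by omega
        have dxz := hdval x z (by omega)
        have dzu := hdval z u (by omega)
        have duy := hdval u y (by omega)
        rw [e1] at dxz
        rw [e2] at dzu
        rw [e3] at duy
        have hxz : x ≠ z := by
          rintro rfl; rw [hwx] at e1; omega
        have hzu : z ≠ u := by
          rintro rfl; rw [hwx] at e2; omega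
        have huy : u ≠ y := by
          rintro rfl; rw [hwx] at e3; omega
        have hzy : z ≠ y := by
          rintro rfl; rw [hwxy] at e1; omega
        have hxu : x ≠ u := by
          rintro rfl; rw [hwxy] at e3; omega
        have dyx : d y x = some 4 := by
          rw [← hsymm x y, hdxy, hv4]
        exact hC ⟨x, z, u, y, hxz, hxu, hxy, hzu, hzy, huy, dxz, dzu, duy, dyx⟩
    have hDtri : ∀ x y z : V, cDist d x z ≤ cDist d x y + cDist d y z := by
      intro x y z
      by_cases h4 : 4 ≤ cDist d x y + cDist d y z
      · exact le_trans (hD4 x z) h4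
      push_neg at h4
      rcases hDP x y with h | ⟨u, h⟩ | ⟨u, u', h⟩ <;>
        rcases hDP y z with g | ⟨p, g⟩ | ⟨p, q, g⟩
      · have := hDle x z _ (Or.inr (Or.inl ⟨y, rfl⟩)); omega
      · have := hDle x z _ (Or.inr (Or.inr ⟨y, p, rfl⟩)); omega
      · have a1 := hw1 y p; have a2 := hw1 p q; have a3 := hw1 q z
        have b1 := hD1 x y; omega
      · have := hDle x z _ (Or.inr (Or.inr ⟨u, y, rfl⟩)); omega
      · have a1 := hw1 x u; have a2 := hw1 u y
        have b1 := hw1 y p; have b2 := hw1 p z; omega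
      · have a1 := hw1 y p; have a2 := hw1 p q; have a3 := hw1 q z
        have b1 := hD1 x y; omega
      · have a1 := hw1 x u; have a2 := hw1 u u'; have a3 := hw1 u' y
        have b1 := hD1 y z; omega
      · have a1 := hw1 x u; have a2 := hw1 u u'; have a3 := hw1 u' y
        have b1 := hD1 y z; omega
      · have a1 := hw1 x u; have a2 := hw1 u u'; have a3 := hw1 u' y
        have b1 := hD1 y z; omega
    refine ⟨cDist d, hDsym, ?_, hDext, fun x y z _ _ _ => hDtri x y z⟩
    intro x y _
    simp only [Set.mem_insert_iff, Set.mem_singleton_iff]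
    have := hD1 x y
    have := hD4 x y
    omega
end
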